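/- Let n ≥ 2. A noncrossing partition π ∈ NC_{n+1} lies on some maximal chain of NC_{n+1} whose Stanley label sequence omits the value n (equivalently, π is an element of Poset(PF_{n,n})) if and only if neither of the following holds: (i) {n, n+1} is a block of π; (ii) {n+1} is a singleton block of π and 1 and n lie in the same block of π. -/

import Mathlib

/-- A parking function of length `n`. -/
def IsParkingFunction (n : ℕ) (f : Fin n → ℕ) : Prop :=
  (∀ i, 1 ≤ f i) ∧
  ∀ i : Fin n, (i : ℕ) + 1 ≤ (Finset.univ.filter fun j => f j ≤ (i : ℕ) + 1).card

/-- `f ∈ PF_{n,k}`: a parking function of length `n` in which the value `k` does not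
occur but each of the values `k+1,…,n` does occur. -/
def IsPFnk (n k : ℕ) (f : Fin n → ℕ) : Prop :=
  IsParkingFunction n f ∧ (∀ i, f i ≠ k) ∧ ∀ m, k < m → m ≤ n → ∃ i, f i = m

/-- Noncrossing partitions of `{1,…,m}`, encoded as setoids (equivalence relations) on `ℕ`
whose nontrivial classes are contained in `[1,m]`, ordered by refinement (σ ≤ τ iff every
block of σ is contained in a block of τ), and satisfying the noncrossing condition: there
are no `a < b < c < d` with `a,c` in one block and `b,d` in a different block. -/
def NCPart (m : ℕ) : Type :=
  {π : Setoid ℕ //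
    (∀ a b : ℕ, π.r a b → a ≠ b → 1 ≤ a ∧ a ≤ m ∧ 1 ≤ b ∧ b ≤ m) ∧
    ∀ a b c d : ℕ, a < b → b < c → c < d → π.r a c → π.r b d → π.r a b}

instance (m : ℕ) : PartialOrder (NCPart m) := by unfold NCPart; infer_instance

/-- `B` is a block (equivalence class) of `π`. -/
def IsBlock {m : ℕ} (π : NCPart m) (B : Set ℕ) : Prop :=
  ∃ a, B = {b | π.1.r a b}

/-- The minimum element `0̂` of `NC_m`: all blocks are singletons. -/
def ncBot (m : ℕ) : NCPart m :=
  ⟨⟨(· = ·), eq_equivalence⟩,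
    fun _ _ hab hne => absurd hab hne,
    fun a b c d hab hbc hcd hac _ => by
      have h : a = c := hac
      omega⟩

/-- The maximum element `1̂` of `NC_m`: one block `{1,…,m}`. -/
def ncTop (m : ℕ) : NCPart m :=
  ⟨⟨fun a b => a = b ∨ (1 ≤ a ∧ a ≤ m ∧ 1 ≤ b ∧ b ≤ m),
    ⟨fun _ => Or.inl rfl,
     fun {a b} h => by omega,
     fun {a b c} h1 h2 => by omega⟩⟩,
    fun a b hab hne => by dsimp only at hab; omega,
    fun a b c d h1 h2 h3 hac hbd => by dsimp only at hac hbd ⊢; omega⟩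

/-- `l` is the Stanley label of the covering relation `σ ⋖ τ` in `NC_m`:
`τ` is obtained from `σ` by merging exactly two blocks `B₁, B₂` (all other blocks
unchanged), where `B₁` contains the minimum of the merged block, and `l` is the
largest element of `B₁` that is smaller than every element of `B₂`. -/
def CoverLabel {m : ℕ} (σ τ : NCPart m) (l : ℕ) : Prop :=
  ∃ B₁ B₂ : Set ℕ, IsBlock σ B₁ ∧ IsBlock σ B₂ ∧ B₁ ≠ B₂ ∧
    (∀ a b, τ.1.r a b ↔ (σ.1.r a b ∨ (a ∈ B₁ ∪ B₂ ∧ b ∈ B₁ ∪ B₂))) ∧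
    (∃ a ∈ B₁, ∀ x ∈ B₁ ∪ B₂, a ≤ x) ∧
    l ∈ B₁ ∧ (∀ y ∈ B₂, l < y) ∧ ∀ x ∈ B₁, (∀ y ∈ B₂, x < y) → x ≤ l

/-- `c 0 ⋖ c 1 ⋖ ⋯ ⋖ c n` is a maximal chain of `NC_{n+1}` (from `0̂` to `1̂`) whose
Stanley label sequence `ℓ 0, …, ℓ (n-1)` is a parking function lying in `PF_{n,k}`. -/
def IsPFChain (n k : ℕ) (c : ℕ → NCPart (n + 1)) (ℓ : ℕ → ℕ) : Prop :=
  c 0 = ncBot (n + 1) ∧ c n = ncTop (n + 1) ∧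
  (∀ i < n, CoverLabel (c i) (c (i + 1)) (ℓ i)) ∧
  IsPFnk n k (fun i : Fin n => ℓ (i : ℕ))

/-- `π` lies on some maximal chain of `NC_{n+1}` whose label sequence is in `PF_{n,k}`,
i.e. `π` is an element of `Poset(PF_{n,k})`. -/
def InPosetPF (n k : ℕ) (π : NCPart (n + 1)) : Prop :=
  ∃ c ℓ, IsPFChain n k c ℓ ∧ ∃ i ≤ n, c i = π

/-- `σ ⋖ τ` is a covering relation occurring on some maximal chain of `NC_{n+1}`
whose label sequence is in `PF_{n,k}`. -/
def PFCover (n k : ℕ) (σ τ : NCPart (n + 1)) : Prop :=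
  ∃ c ℓ, IsPFChain n k c ℓ ∧ ∃ i < n, c i = σ ∧ c (i + 1) = τ

/-- The poset `Poset(PF_{n,k})`: its elements are the noncrossing partitions appearing on
some maximal chain of `NC_{n+1}` whose label sequence lies in `PF_{n,k}`, with order
generated by the covering relations occurring on such chains. -/
def PFPoset (n k : ℕ) : Type := {π : NCPart (n + 1) // InPosetPF n k π}

instance (n k : ℕ) : LE (PFPoset n k) :=
  ⟨fun σ τ => Relation.ReflTransGen (PFCover n k) σ.1 τ.1⟩

instance (n k : ℕ) : LT (PFPoset n k) :=
  ⟨fun σ τ => σ ≤ τ ∧ ¬τ ≤ σ⟩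


namespace NCAux
open Finset
open scoped Classical

variable {m : ℕ}

lemma rel_refl (π : NCPart m) (a : ℕ) : π.1.r a a := π.1.iseqv.refl a
lemma rel_symm (π : NCPart m) {a b : ℕ} (h : π.1.r a b) : π.1.r b a := π.1.iseqv.symm h
lemma rel_trans (π : NCPart m) {a b c : ℕ} (h : π.1.r a b) (h' : π.1.r b c) : π.1.r a c :=
  π.1.iseqv.trans h h'
lemma rel_bounds (π : NCPart m) {a b : ℕ} (h : π.1.r a b) (hne : a ≠ b) :
    1 ≤ a ∧ a ≤ m ∧ 1 ≤ b ∧ b ≤ m := π.2.1 a b h hne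
lemma rel_nc (π : NCPart m) {a b c d : ℕ} (h1 : a < b) (h2 : b < c) (h3 : c < d)
    (hac : π.1.r a c) (hbd : π.1.r b d) : π.1.r a b := π.2.2 a b c d h1 h2 h3 hac hbd

lemma ncpart_ext {π σ : NCPart m} (h : ∀ a b, π.1.r a b ↔ σ.1.r a b) : π = σ := by
  apply Subtype.ext
  apply Setoid.ext
  exact h

/-- Enriched elimination of a cover. -/
lemma cover_elim {σ τ : NCPart m} {l : ℕ} (h : CoverLabel σ τ l) :
    ∃ B1 B2 : Set ℕ,
      (∀ x ∈ B1, ∀ y, (σ.1.r x y ↔ y ∈ B1)) ∧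
      (∀ x ∈ B2, ∀ y, (σ.1.r x y ↔ y ∈ B2)) ∧
      (∀ x, x ∈ B1 → x ∈ B2 → False) ∧
      B1.Nonempty ∧ B2.Nonempty ∧
      (∀ a b, τ.1.r a b ↔ (σ.1.r a b ∨ (a ∈ B1 ∪ B2 ∧ b ∈ B1 ∪ B2))) ∧
      (∃ a ∈ B1, ∀ x ∈ B1 ∪ B2, a ≤ x) ∧
      (∀ x ∈ B1 ∪ B2, 1 ≤ x ∧ x ≤ m) ∧
      l ∈ B1 ∧ (∀ y ∈ B2, l < y) ∧ (∀ x ∈ B1, (∀ y ∈ B2, x < y) → x ≤ l) := by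
  obtain ⟨B1, B2, ⟨a1, hB1⟩, ⟨a2, hB2⟩, hne, hiff, hmin, hl, hlt, hmax⟩ := h
  have class1 : ∀ x ∈ B1, ∀ y, (σ.1.r x y ↔ y ∈ B1) := by
    intro x hx y
    rw [hB1] at hx ⊢
    exact ⟨fun hxy => rel_trans σ hx hxy, fun hy => rel_trans σ (rel_symm σ hx) hy⟩
  have class2 : ∀ x ∈ B2, ∀ y, (σ.1.r x y ↔ y ∈ B2) := by
    intro x hx y
    rw [hB2] at hx ⊢
    exact ⟨fun hxy => rel_trans σ hx hxy, fun hy => rel_trans σ (rel_symm σ hx) hy⟩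
  have h1ne : B1.Nonempty := ⟨a1, by rw [hB1]; exact rel_refl σ a1⟩
  have h2ne : B2.Nonempty := ⟨a2, by rw [hB2]; exact rel_refl σ a2⟩
  have hdisj : ∀ x, x ∈ B1 → x ∈ B2 → False := by
    intro x hx1 hx2
    apply hne
    ext y
    rw [← class1 x hx1 y, ← class2 x hx2 y]
  have hrange : ∀ x ∈ B1 ∪ B2, 1 ≤ x ∧ x ≤ m := by
    intro x hx
    rcases hx with hx | hx
    · obtain ⟨z, hz⟩ := h2ne
      have hxz : τ.1.r x z := (hiff x z).2 (Or.inr ⟨Or.inl hx, Or.inr hz⟩)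
      have : x ≠ z := fun he => hdisj x hx (he ▸ hz)
      have := rel_bounds τ hxz this
      exact ⟨this.1, this.2.1⟩
    · obtain ⟨z, hz⟩ := h1ne
      have hxz : τ.1.r x z := (hiff x z).2 (Or.inr ⟨Or.inr hx, Or.inl hz⟩)
      have : x ≠ z := fun he => hdisj x (he ▸ hz) hx
      have := rel_bounds τ hxz this
      exact ⟨this.1, this.2.1⟩
  exact ⟨B1, B2, class1, class2, hdisj, h1ne, h2ne, hiff, hmin, hrange, hl, hlt, hmax⟩

end NCAux
namespace NCAux
open Finset
open scoped Classical

variable {m : ℕ}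

/-- Number of class-minima in `[1,t]` = number of blocks meeting `[1,t]`. -/
noncomputable def Kf (t : ℕ) (σ : NCPart m) : ℕ :=
  ((Finset.Icc 1 t).filter (fun x => ∀ y, y < x → ¬σ.1.r y x)).card

lemma cover_K_step {σ τ : NCPart m} {l : ℕ} (h : CoverLabel σ τ l) (t : ℕ) :
    Kf t σ ≤ Kf t τ + 1 ∧ (t ≤ l → Kf t σ ≤ Kf t τ) := by
  obtain ⟨B1, B2, class1, class2, hdisj, h1ne, h2ne, hiff, ⟨a0, ha0B, ha0min⟩, hrange,
    hl, hlt, hmax⟩ := cover_elim h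
  set m2 := sInf B2 with hm2def
  have hm2B : m2 ∈ B2 := Nat.sInf_mem h2ne
  have hm2le : ∀ y ∈ B2, m2 ≤ y := fun y hy => Nat.sInf_le hy
  have hlm2 : l < m2 := hlt m2 hm2B
  have ha0m2 : a0 < m2 := by
    have := ha0min m2 (Or.inr hm2B)
    rcases Nat.lt_or_ge a0 m2 with h' | h'
    · exact h'
    · have : a0 = m2 := le_antisymm this h'
      exact absurd (this ▸ hm2B) (fun hc => hdisj a0 ha0B hc)
  -- m2 is a σ-min
  have hm2min : ∀ y, y < m2 → ¬σ.1.r y m2 := by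
    intro y hy hr
    have : y ∈ B2 := (class2 m2 hm2B y).1 (rel_symm σ hr)
    exact absurd (hm2le y this) (by omega)
  -- key: τ-minima = σ-minima minus m2
  have key : ∀ x, (∀ y, y < x → ¬τ.1.r y x) ↔ ((∀ y, y < x → ¬σ.1.r y x) ∧ x ≠ m2) := by
    intro x
    constructor
    · intro hx
      constructor
      · intro y hy hr
        exact hx y hy ((hiff y x).2 (Or.inl hr))
      · rintro rfl
        exact hx a0 ha0m2 ((hiff a0 m2).2 (Or.inr ⟨Or.inl ha0B, Or.inr hm2B⟩))
    · rintro ⟨hxσ, hxm2⟩ y hy hr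
      rcases (hiff y x).1 hr with hr' | ⟨hyU, hxU⟩
      · exact hxσ y hy hr'
      · rcases hxU with hx1 | hx2
        · -- x ∈ B1 and x is σ-min ⇒ x = a0
          have hxa0 : x ≤ a0 := by
            by_contra hgt
            exact hxσ a0 (by omega) ((class1 a0 ha0B x).2 hx1)
          have : x = a0 := le_antisymm hxa0 (ha0min x (Or.inl hx1))
          have := ha0min y hyU
          omega
        · have : m2 ≤ x := hm2le x hx2
          have hxm : x = m2 := by
            by_contra hne'
            exact hxσ m2 (by omega) ((class2 m2 hm2B x).2 hx2)
          exact hxm2 hxm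
  have hfilter : (Finset.Icc 1 t).filter (fun x => ∀ y, y < x → ¬τ.1.r y x)
      = ((Finset.Icc 1 t).filter (fun x => ∀ y, y < x → ¬σ.1.r y x)).erase m2 := by
    ext x
    simp only [Finset.mem_filter, Finset.mem_erase, Finset.mem_Icc]
    constructor
    · rintro ⟨hi, hx⟩
      have := (key x).1 hx
      exact ⟨this.2, hi, this.1⟩
    · rintro ⟨hne', hi, hx⟩
      exact ⟨hi, (key x).2 ⟨hx, hne'⟩⟩
  constructor
  · unfold Kf
    rw [hfilter]
    have := Finset.card_erase_le (a := m2)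
      (s := (Finset.Icc 1 t).filter (fun x => ∀ y, y < x → ¬σ.1.r y x))
    have := Finset.pred_card_le_card_erase (a := m2)
      (s := (Finset.Icc 1 t).filter (fun x => ∀ y, y < x → ¬σ.1.r y x))
    omega
  · intro htl
    unfold Kf
    rw [hfilter]
    rw [Finset.erase_eq_of_notMem]
    simp only [Finset.mem_filter, Finset.mem_Icc]
    rintro ⟨⟨_, h2⟩, _⟩
    omega

lemma Kf_bot (t : ℕ) : Kf t (ncBot m) = t := by
  unfold Kf
  have : (Finset.Icc 1 t).filter (fun x => ∀ y, y < x → ¬(ncBot m).1.r y x)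
      = Finset.Icc 1 t := by
    apply Finset.filter_true_of_mem
    intro x _ y hy hr
    have : y = x := hr
    omega
  rw [this, Nat.card_Icc]
  omega

lemma Kf_top (t : ℕ) (ht1 : 1 ≤ t) (htm : t ≤ m) : Kf t (ncTop m) = 1 := by
  unfold Kf
  have : (Finset.Icc 1 t).filter (fun x => ∀ y, y < x → ¬(ncTop m).1.r y x) = {1} := by
    ext x
    simp only [Finset.mem_filter, Finset.mem_Icc, Finset.mem_singleton]
    constructor
    · rintro ⟨⟨h1, h2⟩, hx⟩
      by_contra hne
      exact hx 1 (by omega) (Or.inr (by omega))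
    · rintro rfl
      exact ⟨⟨le_refl 1, ht1⟩, fun y hy hr => by
        rcases hr with h | h <;> omega⟩
  rw [this, Finset.card_singleton]

lemma card_filter_fin (n : ℕ) (ℓ : ℕ → ℕ) (v : ℕ) :
    (Finset.univ.filter fun j : Fin n => ℓ (j : ℕ) ≤ v).card
      = ((Finset.range n).filter fun k => ℓ k ≤ v).card := by
  apply Finset.card_bij (fun (a : Fin n) _ => (a : ℕ))
  · intro a ha
    simp only [Finset.mem_filter, Finset.mem_univ, true_and] at ha
    simp only [Finset.mem_filter, Finset.mem_range]
    exact ⟨a.2, ha⟩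
  · intro a _ b _ hab
    exact Fin.ext hab
  · intro b hb
    simp only [Finset.mem_filter, Finset.mem_range] at hb
    exact ⟨⟨b, hb.1⟩, by simp [hb.2], rfl⟩

/-- Stanley: labels of a maximal chain form a parking function. -/
lemma chain_parking {n : ℕ} (c : ℕ → NCPart (n + 1)) (ℓ : ℕ → ℕ)
    (h0 : c 0 = ncBot (n + 1)) (hn : c n = ncTop (n + 1))
    (hcov : ∀ i < n, CoverLabel (c i) (c (i + 1)) (ℓ i)) :
    IsParkingFunction n (fun i : Fin n => ℓ (i : ℕ)) := by
  have hpos : ∀ i < n, 1 ≤ ℓ i := by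
    intro i hi
    obtain ⟨B1, B2, _, _, _, _, _, _, _, hrange, hl, _, _⟩ := cover_elim (hcov i hi)
    exact (hrange (ℓ i) (Or.inl hl)).1
  constructor
  · intro i; exact hpos i i.2
  · intro i
    set t := (i : ℕ) + 2 with htdef
    have ht1 : 1 ≤ t := by omega
    have htm : t ≤ n + 1 := by omega
    -- accumulate
    have main : ∀ j ≤ n, Kf t (c 0) ≤ Kf t (c j)
        + ((Finset.range j).filter (fun k => ℓ k + 1 ≤ t)).card := by
      intro j
      induction j with
      | zero => intro _; simp
      | succ j ih =>
        intro hj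
        have hj' : j ≤ n := by omega
        have hstep := cover_K_step (hcov j (by omega)) t
        have hcnt : ((Finset.range (j+1)).filter (fun k => ℓ k + 1 ≤ t)).card
            = ((Finset.range j).filter (fun k => ℓ k + 1 ≤ t)).card
              + (if ℓ j + 1 ≤ t then 1 else 0) := by
          rw [Finset.range_add_one, Finset.filter_insert]
          split
          · rw [Finset.card_insert_of_notMem (by simp)]
          · simp
        by_cases hc : ℓ j + 1 ≤ t
        · have := ih hj'
          have := hstep.1
          rw [hcnt]
          simp only [hc, ↓reduceIte]
          omega
        · have := ih hj'
          have := hstep.2 (by omega)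
          rw [hcnt]
          simp only [hc, ↓reduceIte]
          omega
    have := main n (le_refl n)
    rw [h0, hn, Kf_bot, Kf_top t ht1 htm] at this
    have hcard : (Finset.univ.filter fun j : Fin n => ℓ (j : ℕ) ≤ (i : ℕ) + 1).card
        = ((Finset.range n).filter (fun k => ℓ k + 1 ≤ t)).card := by
      rw [card_filter_fin n ℓ ((i : ℕ) + 1)]
      congr 1
      apply Finset.filter_congr
      intro x _
      constructor <;> intro <;> omega
    show (i : ℕ) + 1 ≤ (Finset.univ.filter fun j : Fin n => ℓ (j : ℕ) ≤ (i : ℕ) + 1).card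
    rw [hcard]
    omega

end NCAux
namespace NCAux
open scoped Classical

lemma chain_mono {m : ℕ} {N : ℕ} (c : ℕ → NCPart m) (ℓ : ℕ → ℕ)
    (hcov : ∀ i < N, CoverLabel (c i) (c (i + 1)) (ℓ i)) :
    ∀ i j, i ≤ j → j ≤ N → ∀ a b, (c i).1.r a b → (c j).1.r a b := by
  intro i j hij hjN a b hab
  induction j with
  | zero =>
    have : i = 0 := by omega
    exact this ▸ hab
  | succ j ih =>
    rcases Nat.lt_or_ge i (j + 1) with h' | h'
    · have hr : (c j).1.r a b := ih (by omega) (by omega)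
      obtain ⟨B1, B2, _, _, _, _, _, hiff, _, _, _, _, _⟩ := cover_elim (hcov j (by omega))
      exact (hiff a b).2 (Or.inl hr)
    · have : i = j + 1 := by omega
      exact this ▸ hab

lemma exists_transition (P : ℕ → Prop) {j0 j1 : ℕ} (h0 : ¬P j0) (h1 : P j1) (hle : j0 ≤ j1) :
    ∃ j, j0 ≤ j ∧ j < j1 ∧ ¬P j ∧ P (j + 1) := by
  by_contra hc
  push_neg at hc
  have key : ∀ d, j0 + d ≤ j1 → ¬P (j0 + d) := by
    intro d
    induction d with
    | zero => intro _; simpa using h0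
    | succ d ih =>
      intro hle'
      have h1' := ih (by omega)
      have h2 := hc (j0 + d) (by omega) (by omega) h1'
      intro hP
      exact h2 hP
  have := key (j1 - j0) (by omega)
  rw [Nat.add_sub_cancel' hle] at this
  exact this h1

/-- Forward direction: condition (i) fails. -/
lemma forward_i {n : ℕ} (hn : 2 ≤ n) (π : NCPart (n + 1)) (h : InPosetPF n n π) :
    ¬(π.1.r n (n + 1) ∧ ∀ x, π.1.r n x → x = n ∨ x = n + 1) := by
  rintro ⟨hnn, hblock⟩
  obtain ⟨c, ℓ, ⟨hc0, hcn, hcov, hpf⟩, i0, hi0, hci0⟩ := h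
  have hbot : ¬(c 0).1.r n (n + 1) := by
    rw [hc0]
    intro h'
    have : n = n + 1 := h'
    omega
  have hπrel : (c i0).1.r n (n + 1) := by rw [hci0]; exact hnn
  obtain ⟨j, hj0, hj1, hPj, hPj1⟩ :=
    exists_transition (fun j => (c j).1.r n (n + 1)) hbot hπrel (Nat.zero_le i0)
  obtain ⟨B1, B2, class1, class2, hdisj, h1ne, h2ne, hiff, ⟨a0, ha0B, ha0min⟩, hrange,
    hl, hlt, hmax⟩ := cover_elim (hcov j (by omega))
  have hU : n ∈ B1 ∪ B2 ∧ (n + 1) ∈ B1 ∪ B2 := by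
    rcases (hiff n (n + 1)).1 hPj1 with h' | h'
    · exact absurd h' hPj
    · exact h'
  have hsub : ∀ x ∈ B1 ∪ B2, x = n ∨ x = n + 1 := by
    intro x hx
    have h1 : (c (j + 1)).1.r n x := (hiff n x).2 (Or.inr ⟨hU.1, hx⟩)
    have h2 : π.1.r n x := by
      rw [← hci0]
      exact chain_mono c ℓ hcov (j + 1) i0 (by omega) hi0 n x h1
    exact hblock x h2
  have ha0n : a0 = n := by
    have h1 := ha0min n hU.1
    rcases hsub a0 (Or.inl ha0B) with h' | h'
    · exact h'
    · omega
  have hlab : ℓ j = n := by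
    rcases hsub (ℓ j) (Or.inl hl) with h' | h'
    · exact h'
    · exfalso
      obtain ⟨z, hz⟩ := h2ne
      rcases hsub z (Or.inr hz) with hz' | hz'
      · have := hlt z hz
        omega
      · exact hdisj (n + 1) (h' ▸ hl) (hz' ▸ hz)
  have hne := hpf.2.1 ⟨j, by omega⟩
  simp only at hne
  exact hne hlab

/-- Forward direction: condition (ii) fails. -/
lemma forward_ii {n : ℕ} (hn : 2 ≤ n) (π : NCPart (n + 1)) (h : InPosetPF n n π) :
    ¬((∀ x, π.1.r (n + 1) x → x = n + 1) ∧ π.1.r 1 n) := by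
  rintro ⟨hsing, h1n⟩
  obtain ⟨c, ℓ, ⟨hc0, hcn, hcov, hpf⟩, i0, hi0, hci0⟩ := h
  set P : ℕ → Prop := fun j => ∃ x, x ≠ n + 1 ∧ (c j).1.r (n + 1) x with hP
  have hPi0 : ¬P i0 := by
    rintro ⟨x, hx, hr⟩
    rw [hci0] at hr
    exact hx (hsing x hr)
  have hPn : P n := by
    refine ⟨1, by omega, ?_⟩
    rw [hcn]
    exact Or.inr (by omega)
  obtain ⟨j, hj0, hj1, hPj, hPj1⟩ := exists_transition P hPi0 hPn hi0
  obtain ⟨B1, B2, class1, class2, hdisj, h1ne, h2ne, hiff, ⟨a0, ha0B, ha0min⟩, hrange,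
    hl, hlt, hmax⟩ := cover_elim (hcov j (by omega))
  obtain ⟨x, hxne, hxr⟩ := hPj1
  have hn1U : (n + 1) ∈ B1 ∪ B2 := by
    rcases (hiff (n + 1) x).1 hxr with h' | h'
    · exact absurd ⟨x, hxne, h'⟩ hPj
    · exact h'.1
  have hn1B2 : (n + 1) ∈ B2 := by
    rcases hn1U with h' | h'
    · exfalso
      have ha0' : a0 = n + 1 := by
        by_contra hne'
        exact hPj ⟨a0, hne', (class1 (n + 1) h' a0).2 ha0B⟩
      obtain ⟨z, hz⟩ := h2ne
      have hz1 := ha0min z (Or.inr hz)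
      have hzb := hrange z (Or.inr hz)
      have hzeq : z = n + 1 := by omega
      exact hdisj z (by rw [hzeq]; exact h') hz
    · exact h'
  have hB2eq : ∀ z ∈ B2, z = n + 1 := by
    intro z hz
    by_contra hne'
    exact hPj ⟨z, hne', (class2 (n + 1) hn1B2 z).2 hz⟩
  -- 1 ~ n in c j and hence in τ := c (j+1)
  have h1nπ : (c i0).1.r 1 n := by rw [hci0]; exact h1n
  have h1nj : (c j).1.r 1 n := chain_mono c ℓ hcov i0 j hj0 (by omega) 1 n h1nπ
  have hτ1n : (c (j + 1)).1.r 1 n := (hiff 1 n).2 (Or.inl h1nj)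
  have hτa0 : (c (j + 1)).1.r a0 (n + 1) :=
    (hiff a0 (n + 1)).2 (Or.inr ⟨Or.inl ha0B, Or.inr hn1B2⟩)
  have ha0b := hrange a0 (Or.inl ha0B)
  have ha0ne1 : a0 ≠ n + 1 := fun he => hdisj a0 ha0B (he ▸ hn1B2)
  -- n ∈ B1
  have hnB1 : n ∈ B1 := by
    by_contra hnB1
    have hτ1n1 : (c (j + 1)).1.r 1 (n + 1) := by
      rcases Nat.eq_or_lt_of_le ha0b.1 with h1a | h1a
      · rw [← h1a] at hτa0
        exact hτa0
      · -- 1 < a0; also a0 ≠ n since n ∉ B1; a0 < n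
        have ha0nen : a0 ≠ n := fun he => hnB1 (he ▸ ha0B)
        have ha0ltn : a0 < n := by omega
        have h1a0 : (c (j + 1)).1.r 1 a0 :=
          rel_nc (c (j + 1)) h1a ha0ltn (by omega) hτ1n hτa0
        exact rel_trans (c (j + 1)) h1a0 hτa0
    have hτnn1 : (c (j + 1)).1.r n (n + 1) :=
      rel_trans (c (j + 1)) (rel_symm (c (j + 1)) hτ1n) hτ1n1
    rcases (hiff n (n + 1)).1 hτnn1 with h' | h'
    · exact hPj ⟨n, by omega, rel_symm (c j) h'⟩
    · rcases h'.1 with h'' | h''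
      · exact hnB1 h''
      · exact absurd (hB2eq n h'') (by omega)
  -- then the label is n: contradiction
  have hlen : n ≤ ℓ j := hmax n hnB1 (fun y hy => by rw [hB2eq y hy]; omega)
  have hlb := hrange (ℓ j) (Or.inl hl)
  have hlne : ℓ j ≠ n + 1 := fun he => hdisj (ℓ j) hl (he ▸ hn1B2)
  have hlab : ℓ j = n := by omega
  have hne := hpf.2.1 ⟨j, by omega⟩
  simp only at hne
  exact hne hlab

end NCAux
namespace NCAux
open Finset
open scoped Classical

variable {m : ℕ}

/-- Splitting the element `y` off from its class. -/
def splitRel (σ : NCPart m) (y : ℕ) : ℕ → ℕ → Prop :=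
  fun a b => σ.1.r a b ∧ (a = y ↔ b = y)

lemma splitRel_equiv (σ : NCPart m) (y : ℕ) : Equivalence (splitRel σ y) where
  refl a := ⟨rel_refl σ a, Iff.rfl⟩
  symm h := ⟨rel_symm σ h.1, h.2.symm⟩
  trans h h' := ⟨rel_trans σ h.1 h'.1, h.2.trans h'.2⟩

lemma splitRel_bounds (σ : NCPart m) (y : ℕ) :
    ∀ a b, splitRel σ y a b → a ≠ b → 1 ≤ a ∧ a ≤ m ∧ 1 ≤ b ∧ b ≤ m :=
  fun a b h hne => rel_bounds σ h.1 hne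

lemma splitRel_nc_max (σ : NCPart m) (y : ℕ) (hmax : ∀ z, σ.1.r y z → z ≤ y) :
    ∀ a b c d, a < b → b < c → c < d → splitRel σ y a c → splitRel σ y b d →
      splitRel σ y a b := by
  intro a b c d h1 h2 h3 hac hbd
  have hab : σ.1.r a b := rel_nc σ h1 h2 h3 hac.1 hbd.1
  refine ⟨hab, ?_⟩
  constructor
  · rintro rfl
    exact absurd (hmax c (hac.1)) (by omega)
  · rintro rfl
    exact absurd (hmax d (hbd.1)) (by omega)

lemma splitRel_nc_n {n : ℕ} (σ : NCPart (n + 1)) (hnn : σ.1.r n (n + 1)) :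
    ∀ a b c d, a < b → b < c → c < d → splitRel σ n a c → splitRel σ n b d →
      splitRel σ n a b := by
  intro a b c d h1 h2 h3 hac hbd
  have hab : σ.1.r a b := rel_nc σ h1 h2 h3 hac.1 hbd.1
  refine ⟨hab, ?_⟩
  constructor
  · intro ha
    have hb1 := rel_bounds σ hac.1 (by omega)
    have hceq : c = n + 1 := by omega
    have hb2 := rel_bounds σ hbd.1 (by omega)
    omega
  · intro hb
    exfalso
    have hb2 := rel_bounds σ hbd.1 (by omega)
    omega

/-- The split partition, given a proof that it is noncrossing. -/
def mkSplit (σ : NCPart m) (y : ℕ)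
    (hnc : ∀ a b c d, a < b → b < c → c < d → splitRel σ y a c → splitRel σ y b d →
      splitRel σ y a b) : NCPart m :=
  ⟨⟨splitRel σ y, splitRel_equiv σ y⟩, splitRel_bounds σ y, hnc⟩

lemma mkSplit_r (σ : NCPart m) (y : ℕ) (hnc) (a b : ℕ) :
    (mkSplit σ y hnc).1.r a b ↔ σ.1.r a b ∧ (a = y ↔ b = y) := Iff.rfl

/-- The split is a cover of `σ`, with label data. -/
lemma split_cover (σ : NCPart m) (y z : ℕ) (hnc) (hz : σ.1.r y z) (hzy : z < y) :
    ∃ l, CoverLabel (mkSplit σ y hnc) σ l ∧ σ.1.r y l ∧ l < y := by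
  have hzb := rel_bounds σ hz (by omega)
  set B1 : Set ℕ := {b | σ.1.r y b ∧ b ≠ y} with hB1def
  set B2 : Set ℕ := {y} with hB2def
  have hzB1 : z ∈ B1 := ⟨hz, by omega⟩
  -- the filter set for the label
  set F := (Finset.Icc 1 m).filter (fun x => σ.1.r y x ∧ x ≠ y ∧ x < y) with hFdef
  have hFne : F.Nonempty := ⟨z, by
    simp only [hFdef, Finset.mem_filter, Finset.mem_Icc]
    exact ⟨⟨hzb.2.2.1, hzb.2.2.2⟩, hz, by omega, hzy⟩⟩
  set l := F.max' hFne with hldef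
  have hlF : l ∈ F := F.max'_mem hFne
  simp only [hFdef, Finset.mem_filter, Finset.mem_Icc] at hlF
  have hU : ∀ x, (x ∈ B1 ∪ B2) ↔ σ.1.r y x := by
    intro x
    constructor
    · rintro (hx | hx)
      · exact hx.1
      · simp only [hB2def, Set.mem_singleton_iff] at hx
        exact hx ▸ rel_refl σ y
    · intro hx
      by_cases hxy : x = y
      · exact Or.inr (by simp [hB2def, hxy])
      · exact Or.inl ⟨hx, hxy⟩
  refine ⟨l, ⟨B1, B2, ⟨z, ?_⟩, ⟨y, ?_⟩, ?_, ?_, ?_, ?_, ?_, ?_⟩, hlF.2.1, hlF.2.2.2⟩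
  · -- B1 is the class of z in the split
    ext b
    constructor
    · rintro ⟨hr, hne⟩
      exact ⟨rel_trans σ (rel_symm σ hz) hr,
        ⟨fun h => absurd h (by omega), fun h => absurd h hne⟩⟩
    · rintro ⟨hr, hiffy⟩
      refine ⟨rel_trans σ hz hr, fun hb => ?_⟩
      have := hiffy.2 hb
      omega
  · -- B2 = {y} is the class of y in the split
    ext b
    simp only [hB2def, Set.mem_singleton_iff]
    constructor
    · intro hb
      exact ⟨by rw [hb], ⟨fun _ => hb, fun _ => rfl⟩⟩
    · rintro ⟨hr, hiffy⟩
      exact (hiffy.1 rfl)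
  · -- B1 ≠ B2
    intro he
    have : z ∈ B2 := he ▸ hzB1
    simp only [hB2def, Set.mem_singleton_iff] at this
    omega
  · -- the merge equation
    intro a b
    constructor
    · intro hab
      by_cases hy : (a = y ↔ b = y)
      · exact Or.inl ⟨hab, hy⟩
      · refine Or.inr ⟨(hU a).2 ?_, (hU b).2 ?_⟩
        · by_cases hay : a = y
          · rw [hay]
          · have hby : b = y := by tauto
            rw [← hby]; exact rel_symm σ hab
        · by_cases hby : b = y
          · rw [hby]
          · have hay : a = y := by tauto
            rw [← hay]; exact hab
    · rintro (hab | ⟨ha, hb⟩)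
      · exact hab.1
      · exact rel_trans σ (rel_symm σ ((hU a).1 ha)) ((hU b).1 hb)
  · -- min witness
    refine ⟨sInf {b | σ.1.r y b}, ?_, ?_⟩
    · have hmem : sInf {b | σ.1.r y b} ∈ {b | σ.1.r y b} :=
        Nat.sInf_mem ⟨y, rel_refl σ y⟩
      have hlez : sInf {b | σ.1.r y b} ≤ z := Nat.sInf_le hz
      exact ⟨hmem, by omega⟩
    · intro x hx
      exact Nat.sInf_le ((hU x).1 hx)
  · -- l ∈ B1
    exact ⟨hlF.2.1, by omega⟩
  · -- l < everything in B2
    intro y' hy'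
    simp only [hB2def, Set.mem_singleton_iff] at hy'
    rw [hy']
    exact hlF.2.2.2
  · -- maximality
    intro x hx hxlt
    have hxy : x < y := hxlt y (by simp [hB2def])
    have hxb := rel_bounds σ hx.1 (fun he => hx.2 he.symm)
    apply F.le_max'
    simp only [hFdef, Finset.mem_filter, Finset.mem_Icc]
    exact ⟨⟨hxb.2.2.1, hxb.2.2.2⟩, hx.1, hx.2, hxy⟩

end NCAux
namespace NCAux
open Finset
open scoped Classical

variable {m : ℕ}

/-- Number of elements of `[1,m]` that are not minimal in their block. -/
noncomputable def sNM (σ : NCPart m) : ℕ :=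
  ((Finset.Icc 1 m).filter (fun x => ∃ y, y < x ∧ σ.1.r y x)).card

lemma sNM_subset (σ : NCPart m) :
    ((Finset.Icc 1 m).filter (fun x => ∃ y, y < x ∧ σ.1.r y x)) ⊆ Finset.Icc 2 m := by
  intro x hx
  simp only [Finset.mem_filter, Finset.mem_Icc] at hx ⊢
  obtain ⟨⟨h1, h2⟩, y, hy, hr⟩ := hx
  have := rel_bounds σ hr (by omega)
  omega

lemma sNM_le (σ : NCPart m) : sNM σ ≤ m - 1 := by
  have := Finset.card_le_card (sNM_subset σ)
  rw [Nat.card_Icc] at this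
  unfold sNM
  omega

lemma sNM_zero (σ : NCPart m) (h : sNM σ = 0) : σ = ncBot m := by
  have hemp := Finset.card_eq_zero.1 h
  have hmin : ∀ x, ¬∃ y, y < x ∧ σ.1.r y x := by
    intro x ⟨y, hy, hr⟩
    have hb := rel_bounds σ hr (by omega)
    have : x ∈ ((Finset.Icc 1 m).filter (fun x => ∃ y, y < x ∧ σ.1.r y x)) := by
      simp only [Finset.mem_filter, Finset.mem_Icc]
      exact ⟨⟨hb.2.2.1, hb.2.2.2⟩, y, hy, hr⟩
    rw [hemp] at this
    exact absurd this (Finset.notMem_empty x)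
  apply ncpart_ext
  intro a b
  constructor
  · intro hr
    by_contra hne
    rcases Nat.lt_trichotomy a b with h' | h' | h'
    · exact hmin b ⟨a, h', hr⟩
    · exact hne h'
    · exact hmin a ⟨b, h', rel_symm σ hr⟩
  · intro hr
    have h : a = b := hr
    rw [h]

lemma sNM_max (σ : NCPart m) (hm : 1 ≤ m) (h : sNM σ = m - 1) : σ = ncTop m := by
  have heq : ((Finset.Icc 1 m).filter (fun x => ∃ y, y < x ∧ σ.1.r y x))
      = Finset.Icc 2 m := by
    apply Finset.eq_of_subset_of_card_le (sNM_subset σ)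
    rw [Nat.card_Icc]
    unfold sNM at h
    omega
  have hnonmin : ∀ x, 2 ≤ x → x ≤ m → ∃ y, y < x ∧ σ.1.r y x := by
    intro x h2 hxm
    have : x ∈ Finset.Icc 2 m := by simp only [Finset.mem_Icc]; omega
    rw [← heq] at this
    simp only [Finset.mem_filter] at this
    exact this.2
  -- every x ∈ [1,m] is related to 1, by strong induction
  have hrel1 : ∀ x, 1 ≤ x → x ≤ m → σ.1.r 1 x := by
    intro x
    induction x using Nat.strong_induction_on with
    | _ x ih =>
      intro h1 hxm
      rcases Nat.eq_or_lt_of_le h1 with h' | h'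
      · rw [← h']
      · obtain ⟨y, hy, hr⟩ := hnonmin x (by omega) hxm
        have hb := rel_bounds σ hr (by omega)
        exact rel_trans σ (ih y hy hb.1 (by omega)) hr
  apply ncpart_ext
  intro a b
  constructor
  · intro hr
    by_cases hab : a = b
    · exact Or.inl hab
    · have := rel_bounds σ hr hab
      exact Or.inr this
  · rintro (rfl | ⟨h1, h2, h3, h4⟩)
    · exact rel_refl σ a
    · exact rel_trans σ (rel_symm σ (hrel1 a h1 h2)) (hrel1 b h3 h4)

lemma sNM_pos_elim (σ : NCPart m) (h : sNM σ ≠ 0) :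
    ∃ x z, z < x ∧ σ.1.r z x := by
  have : ((Finset.Icc 1 m).filter (fun x => ∃ y, y < x ∧ σ.1.r y x)).Nonempty := by
    rw [← Finset.card_pos]
    unfold sNM at h
    omega
  obtain ⟨x, hx⟩ := this
  simp only [Finset.mem_filter] at hx
  obtain ⟨_, y, hy, hr⟩ := hx
  exact ⟨x, y, hy, hr⟩

lemma split_sNM (σ : NCPart m) (y z : ℕ) (hnc) (hz : σ.1.r y z) (hzy : z < y) :
    sNM (mkSplit σ y hnc) + 1 = sNM σ := by
  have hzb := rel_bounds σ hz (by omega)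
  have hfil : ((Finset.Icc 1 m).filter (fun x => ∃ w, w < x ∧ (mkSplit σ y hnc).1.r w x))
      = ((Finset.Icc 1 m).filter (fun x => ∃ w, w < x ∧ σ.1.r w x)).erase y := by
    ext x
    simp only [Finset.mem_filter, Finset.mem_erase, Finset.mem_Icc]
    constructor
    · rintro ⟨hic, w, hw, hr⟩
      refine ⟨?_, hic, w, hw, hr.1⟩
      rintro rfl
      have := hr.2.2 rfl
      omega
    · rintro ⟨hne, hic, w, hw, hr⟩
      refine ⟨hic, ?_⟩
      by_cases hwy : w = y
      · -- use the min of the class of y instead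
        refine ⟨sInf {b | σ.1.r y b}, ?_, ?_, ?_⟩
        · have h1 : sInf {b | σ.1.r y b} ≤ z := Nat.sInf_le hz
          omega
        · have hmem : sInf {b | σ.1.r y b} ∈ {b | σ.1.r y b} :=
            Nat.sInf_mem ⟨y, rel_refl σ y⟩
          exact rel_trans σ (rel_symm σ hmem) (hwy ▸ hr)
        · constructor
          · intro h'
            exfalso
            have h1 : sInf {b | σ.1.r y b} ≤ z := Nat.sInf_le hz
            omega
          · intro h'
            exact absurd h' hne
      · exact ⟨w, hw, hr, ⟨fun h => absurd h hwy, fun h => absurd h hne⟩⟩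
  have hymem : y ∈ ((Finset.Icc 1 m).filter (fun x => ∃ w, w < x ∧ σ.1.r w x)) := by
    simp only [Finset.mem_filter, Finset.mem_Icc]
    exact ⟨⟨by omega, by omega⟩, z, hzy, rel_symm σ hz⟩
  unfold sNM
  rw [hfil, Finset.card_erase_of_mem hymem]
  have : 0 < ((Finset.Icc 1 m).filter (fun x => ∃ w, w < x ∧ σ.1.r w x)).card :=
    Finset.card_pos.2 ⟨y, hymem⟩
  omega

end NCAux
namespace NCAux
open Finset
open scoped Classical

variable {m : ℕ}

/-- Merging the block of `1` with the block of `v`. -/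
def mergeRel (σ : NCPart m) (v : ℕ) : ℕ → ℕ → Prop :=
  fun a b => σ.1.r a b ∨ ((σ.1.r 1 a ∨ σ.1.r v a) ∧ (σ.1.r 1 b ∨ σ.1.r v b))

lemma memU_trans (σ : NCPart m) (v : ℕ) {a b : ℕ} (h : σ.1.r a b)
    (ha : σ.1.r 1 a ∨ σ.1.r v a) : σ.1.r 1 b ∨ σ.1.r v b := by
  rcases ha with ha | ha
  · exact Or.inl (rel_trans σ ha h)
  · exact Or.inr (rel_trans σ ha h)

lemma mergeRel_equiv (σ : NCPart m) (v : ℕ) : Equivalence (mergeRel σ v) where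
  refl a := Or.inl (rel_refl σ a)
  symm {a b} h := by
    rcases h with h | ⟨h1, h2⟩
    · exact Or.inl (rel_symm σ h)
    · exact Or.inr ⟨h2, h1⟩
  trans {a b c} h h' := by
    rcases h with h | ⟨h1, h2⟩ <;> rcases h' with h' | ⟨h1', h2'⟩
    · exact Or.inl (rel_trans σ h h')
    · exact Or.inr ⟨memU_trans σ v (rel_symm σ h) h1', h2'⟩
    · exact Or.inr ⟨h1, memU_trans σ v h' h2⟩
    · exact Or.inr ⟨h1, h2'⟩

lemma memU_bounds (σ : NCPart m) (v : ℕ) (hm : 1 ≤ m) (hv1 : 1 ≤ v) (hvm : v ≤ m)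
    {x : ℕ} (hx : σ.1.r 1 x ∨ σ.1.r v x) : 1 ≤ x ∧ x ≤ m := by
  rcases hx with hx | hx
  · by_cases h1 : x = 1
    · omega
    · have := rel_bounds σ hx (fun h => h1 h.symm)
      omega
  · by_cases h1 : x = v
    · omega
    · have := rel_bounds σ hx (fun h => h1 h.symm)
      omega

lemma mergeRel_bounds (σ : NCPart m) (v : ℕ) (hm : 1 ≤ m) (hv1 : 1 ≤ v) (hvm : v ≤ m) :
    ∀ a b, mergeRel σ v a b → a ≠ b → 1 ≤ a ∧ a ≤ m ∧ 1 ≤ b ∧ b ≤ m := by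
  intro a b h hne
  rcases h with h | ⟨h1, h2⟩
  · exact rel_bounds σ h hne
  · have := memU_bounds σ v hm hv1 hvm h1
    have := memU_bounds σ v hm hv1 hvm h2
    omega

/-- Noncrossing: merging the class of `1` with the singleton class `{m}`. -/
lemma merge_nc_sing (σ : NCPart m) (hm : 1 ≤ m) (hsing : ∀ x, σ.1.r m x → x = m) :
    ∀ a b c d, a < b → b < c → c < d → mergeRel σ m a c → mergeRel σ m b d →
      mergeRel σ m a b := by
  intro a b c d h1 h2 h3 hac hbd
  rcases hac with hac | ⟨haU, hcU⟩
  · rcases hbd with hbd | ⟨hbU, hdU⟩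
    · exact Or.inl (rel_nc σ h1 h2 h3 hac hbd)
    · -- σ.r a c, b and d in the union
      have hb1 : σ.1.r 1 b := by
        rcases hbU with hb | hb
        · exact hb
        · exfalso
          have hbm : b = m := hsing b hb
          rcases hdU with hd | hd
          · have := rel_bounds σ hd (by omega)
            omega
          · have := hsing d hd
            omega
      rcases hdU with hd | hd
      · -- σ.r 1 d : then σ.r b d, reduce to plain noncrossing
        exact Or.inl (rel_nc σ h1 h2 h3 hac (rel_trans σ (rel_symm σ hb1) hd))
      · -- d = m
        by_cases ha1 : a = 1
        · exact Or.inl (by rw [ha1]; exact hb1)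
        · have hab := rel_bounds σ hac (by omega)
          have h1a : σ.1.r 1 a := rel_nc σ (by omega) h1 h2 hb1 hac
          exact Or.inr ⟨Or.inl h1a, Or.inl hb1⟩
  · rcases hbd with hbd | ⟨hbU, hdU⟩
    · -- a, c in union, σ.r b d
      have hc1 : σ.1.r 1 c := by
        rcases hcU with hc | hc
        · exact hc
        · exfalso
          have := hsing c hc
          have := rel_bounds σ hbd (by omega)
          omega
      have ha1 : σ.1.r 1 a := by
        rcases haU with ha | ha
        · exact ha
        · exfalso
          have := hsing a ha
          have := rel_bounds σ hc1 (by omega)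
          omega
      exact Or.inl (rel_nc σ h1 h2 h3 (rel_trans σ (rel_symm σ ha1) hc1) hbd)
    · exact Or.inr ⟨haU, hbU⟩

/-- Noncrossing: merging the class of `1` with the class of the least element
not related to `1`. -/
lemma merge_nc_least (σ : NCPart m) (v : ℕ) (hv1 : 1 ≤ v) (hvm : v ≤ m)
    (hnv : ¬σ.1.r 1 v) (hleast : ∀ x, 1 ≤ x → x < v → σ.1.r 1 x) :
    ∀ a b c d, a < b → b < c → c < d → mergeRel σ v a c → mergeRel σ v b d →
      mergeRel σ v a b := by
  have hv2 : 2 ≤ v := by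
    rcases Nat.eq_or_lt_of_le hv1 with h | h
    · exact absurd (h ▸ rel_refl σ 1) hnv
    · omega
  -- any element not related to 1 and in [1,m] is ≥ v
  have hge : ∀ x, 1 ≤ x → ¬σ.1.r 1 x → v ≤ x := by
    intro x h1 hx
    by_contra h'
    exact hx (hleast x h1 (by omega))
  intro a b c d h1 h2 h3 hac hbd
  rcases hac with hac | ⟨haU, hcU⟩
  · rcases hbd with hbd | ⟨hbU, hdU⟩
    · exact Or.inl (rel_nc σ h1 h2 h3 hac hbd)
    · -- σ.r a c ; b, d ∈ U
      rcases hbU with hb | hb <;> rcases hdU with hd | hd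
      · exact Or.inl (rel_nc σ h1 h2 h3 hac (rel_trans σ (rel_symm σ hb) hd))
      · -- σ.r 1 b, σ.r v d : show a ∈ U (or σ.r a b)
        by_cases haU' : σ.1.r 1 a ∨ σ.1.r v a
        · exact Or.inr ⟨haU', Or.inl hb⟩
        · exfalso
          push_neg at haU'
          have hab := rel_bounds σ hac (by omega)
          have hav : v ≤ a := hge a (by omega) haU'.1
          have hane : a ≠ v := fun h => haU'.2 (h ▸ rel_refl σ v)
          have h1a : σ.1.r 1 a := rel_nc σ (by omega) h1 h2 hb hac
          exact haU'.1 h1a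
      · -- σ.r v b, σ.r 1 d
        by_cases haU' : σ.1.r 1 a ∨ σ.1.r v a
        · exact Or.inr ⟨haU', Or.inr hb⟩
        · exfalso
          push_neg at haU'
          have hab := rel_bounds σ hac (by omega)
          have hav : v ≤ a := hge a (by omega) haU'.1
          have hane : a ≠ v := fun h => haU'.2 (h ▸ rel_refl σ v)
          have hva : σ.1.r v a := rel_nc σ (by omega) h1 h2 hb hac
          exact haU'.2 hva
      · exact Or.inl (rel_nc σ h1 h2 h3 hac (rel_trans σ (rel_symm σ hb) hd))
  · rcases hbd with hbd | ⟨hbU, hdU⟩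
    · -- a, c ∈ U ; σ.r b d
      rcases haU with ha | ha <;> rcases hcU with hc | hc
      · exact Or.inl (rel_nc σ h1 h2 h3 (rel_trans σ (rel_symm σ ha) hc) hbd)
      · -- σ.r 1 a, σ.r v c : show b ∈ U or contradiction
        by_cases hbU' : σ.1.r 1 b ∨ σ.1.r v b
        · exact Or.inr ⟨Or.inl ha, hbU'⟩
        · exfalso
          push_neg at hbU'
          have hbb := rel_bounds σ hbd (by omega)
          have hbv : v ≤ b := hge b (by omega) hbU'.1
          have hbne : b ≠ v := fun h => hbU'.2 (h ▸ rel_refl σ v)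
          have hvb : σ.1.r v b := rel_nc σ (by omega) h2 h3 hc hbd
          exact hbU'.2 hvb
      · -- σ.r v a, σ.r 1 c
        by_cases hbU' : σ.1.r 1 b ∨ σ.1.r v b
        · exact Or.inr ⟨Or.inr ha, hbU'⟩
        · exfalso
          push_neg at hbU'
          have hbb := rel_bounds σ hbd (by omega)
          have hbv : v ≤ b := hge b (by omega) hbU'.1
          have hbne : b ≠ v := fun h => hbU'.2 (h ▸ rel_refl σ v)
          have h1b : σ.1.r 1 b := rel_nc σ (by omega) h2 h3 hc hbd
          exact hbU'.1 h1b
      · exact Or.inl (rel_nc σ h1 h2 h3 (rel_trans σ (rel_symm σ ha) hc) hbd)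
    · exact Or.inr ⟨haU, hbU⟩

/-- The merged partition. -/
def mkMerge (σ : NCPart m) (v : ℕ) (hm : 1 ≤ m) (hv1 : 1 ≤ v) (hvm : v ≤ m)
    (hnc : ∀ a b c d, a < b → b < c → c < d → mergeRel σ v a c → mergeRel σ v b d →
      mergeRel σ v a b) : NCPart m :=
  ⟨⟨mergeRel σ v, mergeRel_equiv σ v⟩, mergeRel_bounds σ v hm hv1 hvm, hnc⟩

lemma mkMerge_r (σ : NCPart m) (v : ℕ) (hm hv1 hvm hnc) (a b : ℕ) :
    (mkMerge σ v hm hv1 hvm hnc).1.r a b ↔ mergeRel σ v a b := Iff.rfl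

lemma merge_cover (σ : NCPart m) (v : ℕ) (hm : 1 ≤ m) (hv1 : 1 ≤ v) (hvm : v ≤ m)
    (hnv : ¬σ.1.r 1 v) (hClassV : ∀ x, σ.1.r v x → v ≤ x) (hnc) :
    ∃ l, CoverLabel σ (mkMerge σ v hm hv1 hvm hnc) l ∧ σ.1.r 1 l ∧ l < v := by
  have hv2 : 2 ≤ v := by
    rcases Nat.eq_or_lt_of_le hv1 with h | h
    · exact absurd (h ▸ rel_refl σ 1) hnv
    · omega
  set B1 : Set ℕ := {b | σ.1.r 1 b} with hB1def
  set B2 : Set ℕ := {b | σ.1.r v b} with hB2def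
  have hUB : ∀ x, (x ∈ B1 ∪ B2) ↔ (σ.1.r 1 x ∨ σ.1.r v x) := by
    intro x
    constructor
    · rintro (hx | hx)
      · exact Or.inl hx
      · exact Or.inr hx
    · rintro (hx | hx)
      · exact Or.inl hx
      · exact Or.inr hx
  set F := (Finset.Icc 1 m).filter (fun x => σ.1.r 1 x ∧ x < v) with hFdef
  have hFne : F.Nonempty := ⟨1, by
    simp only [hFdef, Finset.mem_filter, Finset.mem_Icc]
    exact ⟨⟨le_refl 1, hm⟩, rel_refl σ 1, by omega⟩⟩
  set l := F.max' hFne with hldef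
  have hlF : l ∈ F := F.max'_mem hFne
  simp only [hFdef, Finset.mem_filter, Finset.mem_Icc] at hlF
  refine ⟨l, ⟨B1, B2, ⟨1, rfl⟩, ⟨v, rfl⟩, ?_, ?_, ?_, ?_, ?_, ?_⟩, hlF.2.1, hlF.2.2⟩
  · -- B1 ≠ B2
    intro he
    have : v ∈ B1 := he ▸ (show v ∈ B2 from rel_refl σ v)
    exact hnv this
  · -- the merge equation
    intro a b
    rw [mkMerge_r]
    unfold mergeRel
    rw [hUB a, hUB b]
  · -- min witness
    refine ⟨1, rel_refl σ 1, ?_⟩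
    intro x hx
    rcases (hUB x).1 hx with hx' | hx'
    · exact (memU_bounds σ v hm hv1 hvm (Or.inl hx')).1
    · have := hClassV x hx'
      omega
  · -- l ∈ B1
    exact hlF.2.1
  · -- l < everything in B2
    intro y hy
    have : v ≤ y := hClassV y hy
    omega
  · -- maximality
    intro x hx hxlt
    have hxv : x < v := hxlt v (rel_refl σ v)
    have hxb := memU_bounds σ v hm hv1 hvm (Or.inl hx)
    apply F.le_max'
    simp only [hFdef, Finset.mem_filter, Finset.mem_Icc]
    exact ⟨⟨hxb.1, hxb.2⟩, hx, hxv⟩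

lemma merge_sNM (σ : NCPart m) (v : ℕ) (hm hv1 hvm) (hnv : ¬σ.1.r 1 v)
    (hClassV : ∀ x, σ.1.r v x → v ≤ x) (hnc) :
    sNM (mkMerge σ v hm hv1 hvm hnc) = sNM σ + 1 := by
  have hv2 : 2 ≤ v := by
    rcases Nat.eq_or_lt_of_le hv1 with h | h
    · exact absurd (h ▸ rel_refl σ 1) hnv
    · omega
  have hfil : ((Finset.Icc 1 m).filter
        (fun x => ∃ w, w < x ∧ (mkMerge σ v hm hv1 hvm hnc).1.r w x))
      = insert v ((Finset.Icc 1 m).filter (fun x => ∃ w, w < x ∧ σ.1.r w x)) := by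
    ext x
    simp only [Finset.mem_filter, Finset.mem_insert, Finset.mem_Icc]
    constructor
    · rintro ⟨hic, w, hw, hr⟩
      rcases hr with hr | ⟨hwU, hxU⟩
      · exact Or.inr ⟨hic, w, hw, hr⟩
      · rcases hxU with hx | hx
        · by_cases hx1 : x = 1
          · exfalso
            have := memU_bounds σ v hm hv1 hvm hwU
            omega
          · exact Or.inr ⟨hic, 1, by
              have := memU_bounds σ v hm hv1 hvm (Or.inl hx)
              omega, hx⟩
        · by_cases hxv : x = v
          · exact Or.inl hxv
          · have := hClassV x hx
            exact Or.inr ⟨hic, v, by omega, hx⟩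
    · rintro (hxv | ⟨hic, w, hw, hr⟩)
      · refine ⟨by omega, 1, by omega, Or.inr ⟨Or.inl (rel_refl σ 1), Or.inr ?_⟩⟩
        rw [hxv]
      · exact ⟨hic, w, hw, Or.inl hr⟩
  have hvnot : v ∉ ((Finset.Icc 1 m).filter (fun x => ∃ w, w < x ∧ σ.1.r w x)) := by
    simp only [Finset.mem_filter, Finset.mem_Icc]
    rintro ⟨_, w, hw, hr⟩
    have := hClassV w (rel_symm σ hr)
    omega
  unfold sNM
  rw [hfil, Finset.card_insert_of_notMem hvnot]

end NCAux
namespace NCAux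
open Finset
open scoped Classical

/-- Downward chain: from `0̂` to `π` avoiding label `n`. -/
lemma down {n : ℕ} (hn : 2 ≤ n) :
    ∀ k, ∀ π : NCPart (n + 1), sNM π = k →
    ¬(π.1.r n (n + 1) ∧ ∀ x, π.1.r n x → x = n ∨ x = n + 1) →
    ∃ (c : ℕ → NCPart (n + 1)) (ℓ : ℕ → ℕ),
      c 0 = ncBot (n + 1) ∧ c k = π ∧
      ∀ i < k, CoverLabel (c i) (c (i + 1)) (ℓ i) ∧ ℓ i ≠ n := by
  intro k
  induction k with
  | zero =>
    intro π hs _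
    refine ⟨fun _ => π, fun _ => 0, ?_, rfl, fun i hi => absurd hi (by omega)⟩
    exact sNM_zero π hs
  | succ k ih =>
    intro π hs hI
    by_cases hc : π.1.r n (n + 1)
    · -- the class of n contains n+1 and (by hI) some element < n : split off n
      have hx0 : ∃ x0, π.1.r n x0 ∧ x0 ≠ n ∧ x0 ≠ n + 1 := by
        by_contra hx
        push_neg at hx
        exact hI ⟨hc, fun x hr => by
          by_cases h1 : x = n
          · exact Or.inl h1
          · exact Or.inr (hx x hr h1)⟩
      obtain ⟨x0, hx0r, hx0n, hx0n1⟩ := hx0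
      have hx0b := rel_bounds π hx0r (fun h => hx0n h.symm)
      have hx0lt : x0 < n := by omega
      have hnc := splitRel_nc_n π hc
      obtain ⟨l, hcov, hrel, hlt⟩ := split_cover π n x0 hnc hx0r hx0lt
      have hsσ : sNM (mkSplit π n hnc) = k := by
        have := split_sNM π n x0 hnc hx0r hx0lt
        omega
      have hI' : ¬((mkSplit π n hnc).1.r n (n + 1) ∧
          ∀ x, (mkSplit π n hnc).1.r n x → x = n ∨ x = n + 1) := by
        rintro ⟨h, _⟩
        have := h.2.1 rfl
        omega
      obtain ⟨c', ℓ', h0, hk, hcovs⟩ := ih (mkSplit π n hnc) hsσ hI'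
      refine ⟨fun i => if i = k + 1 then π else c' i, fun i => if i = k then l else ℓ' i,
        ?_, ?_, ?_⟩
      · dsimp only
        rw [if_neg (by omega)]
        exact h0
      · dsimp only
        rw [if_pos rfl]
      · intro i hi
        dsimp only
        by_cases hik : i = k
        · subst hik
          have e1 : (if i = i + 1 then π else c' i) = c' i := if_neg (by omega)
          have e2 : (if i + 1 = i + 1 then π else c' (i + 1)) = π := if_pos rfl
          have e3 : (if i = i then l else ℓ' i) = l := if_pos rfl
          rw [e1, e2, e3, hk]
          exact ⟨hcov, by omega⟩
        · have e1 : (if i = k + 1 then π else c' i) = c' i := if_neg (by omega)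
          have e2 : (if i + 1 = k + 1 then π else c' (i + 1)) = c' (i + 1) := if_neg (by omega)
          have e3 : (if i = k then l else ℓ' i) = ℓ' i := if_neg hik
          rw [e1, e2, e3]
          exact hcovs i (by omega)
    · -- split the maximum off some nontrivial class
      obtain ⟨x, z, hz, hr⟩ := sNM_pos_elim π (by omega)
      have hzb := rel_bounds π hr (by omega)
      set Fy := (Finset.Icc 1 (n + 1)).filter (fun b => π.1.r x b) with hFydef
      have hFyne : Fy.Nonempty := ⟨x, by
        simp only [hFydef, Finset.mem_filter, Finset.mem_Icc]
        exact ⟨⟨by omega, by omega⟩, rel_refl π x⟩⟩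
      set y := Fy.max' hFyne with hydef
      have hyF : y ∈ Fy := Fy.max'_mem hFyne
      simp only [hFydef, Finset.mem_filter, Finset.mem_Icc] at hyF
      have hxy : x ≤ y := Fy.le_max' x (by
        simp only [hFydef, Finset.mem_filter, Finset.mem_Icc]
        exact ⟨⟨by omega, by omega⟩, rel_refl π x⟩)
      have hmax : ∀ w, π.1.r y w → w ≤ y := by
        intro w hw
        by_cases hwy : w = y
        · omega
        · have hxw : π.1.r x w := rel_trans π hyF.2 hw
          have hwb := rel_bounds π hw (fun h => hwy h.symm)
          apply Fy.le_max'
          simp only [hFydef, Finset.mem_filter, Finset.mem_Icc]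
          exact ⟨⟨by omega, by omega⟩, hxw⟩
      have hyz : π.1.r y z := rel_trans π (rel_symm π hyF.2) (rel_symm π hr)
      have hzy : z < y := by omega
      have hnc := splitRel_nc_max π y hmax
      obtain ⟨l, hcov, hrel, hlt⟩ := split_cover π y z hnc hyz hzy
      have hlnen : l ≠ n := by
        intro hln
        apply hc
        have hy1 : y = n + 1 := by omega
        have hyl : π.1.r y l := hrel
        rw [hy1, hln] at hyl
        exact rel_symm π hyl
      have hsσ : sNM (mkSplit π y hnc) = k := by
        have := split_sNM π y z hnc hyz hzy
        omega
      have hI' : ¬((mkSplit π y hnc).1.r n (n + 1) ∧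
          ∀ x, (mkSplit π y hnc).1.r n x → x = n ∨ x = n + 1) := by
        rintro ⟨h, _⟩
        exact hc h.1
      obtain ⟨c', ℓ', h0, hk, hcovs⟩ := ih (mkSplit π y hnc) hsσ hI'
      refine ⟨fun i => if i = k + 1 then π else c' i, fun i => if i = k then l else ℓ' i,
        ?_, ?_, ?_⟩
      · dsimp only
        rw [if_neg (by omega)]
        exact h0
      · dsimp only
        rw [if_pos rfl]
      · intro i hi
        dsimp only
        by_cases hik : i = k
        · subst hik
          have e1 : (if i = i + 1 then π else c' i) = c' i := if_neg (by omega)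
          have e2 : (if i + 1 = i + 1 then π else c' (i + 1)) = π := if_pos rfl
          have e3 : (if i = i then l else ℓ' i) = l := if_pos rfl
          rw [e1, e2, e3, hk]
          exact ⟨hcov, hlnen⟩
        · have e1 : (if i = k + 1 then π else c' i) = c' i := if_neg (by omega)
          have e2 : (if i + 1 = k + 1 then π else c' (i + 1)) = c' (i + 1) := if_neg (by omega)
          have e3 : (if i = k then l else ℓ' i) = ℓ' i := if_neg hik
          rw [e1, e2, e3]
          exact hcovs i (by omega)

/-- Upward chain: from `π` to `1̂` avoiding label `n`. -/
lemma up {n : ℕ} (hn : 2 ≤ n) :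
    ∀ k, ∀ π : NCPart (n + 1), n - sNM π = k →
    ((∀ x, π.1.r (n + 1) x → x = n + 1) → ¬π.1.r 1 n) →
    ∃ (c : ℕ → NCPart (n + 1)) (ℓ : ℕ → ℕ),
      c 0 = π ∧ c k = ncTop (n + 1) ∧
      ∀ i < k, CoverLabel (c i) (c (i + 1)) (ℓ i) ∧ ℓ i ≠ n := by
  intro k
  induction k with
  | zero =>
    intro π hs _
    have hle : sNM π ≤ n := by
      have := sNM_le π
      omega
    refine ⟨fun _ => π, fun _ => 0, rfl, ?_, fun i hi => absurd hi (by omega)⟩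
    have : sNM π = (n + 1) - 1 := by omega
    exact sNM_max π (by omega) this
  | succ k ih =>
    intro π hs hQ
    have hsn : sNM π < n := by omega
    by_cases hsing : ∀ x, π.1.r (n + 1) x → x = n + 1
    · -- n+1 is a singleton: merge it with the class of 1 (which misses n)
      have h1n : ¬π.1.r 1 n := hQ hsing
      have hnv : ¬π.1.r 1 (n + 1) := by
        intro h
        have := hsing 1 (rel_symm π h)
        omega
      have hClassV : ∀ x, π.1.r (n + 1) x → n + 1 ≤ x := by
        intro x hx
        have := hsing x hx
        omega
      have hm' : (1 : ℕ) ≤ n + 1 := by omega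
      have hnc := merge_nc_sing π hm' hsing
      obtain ⟨l, hcov, hl1, hlv⟩ := merge_cover π (n + 1) hm' hm'
        (le_refl (n + 1)) hnv hClassV hnc
      set τ := mkMerge π (n + 1) hm' hm' (le_refl (n + 1)) hnc with hτdef
      have hlnen : l ≠ n := fun h => h1n (h ▸ hl1)
      have hsτ : n - sNM τ = k := by
        have hms := merge_sNM π (n + 1) hm' hm' (le_refl (n + 1)) hnv hClassV hnc
        rw [← hτdef] at hms
        omega
      have hQτ : (∀ x, τ.1.r (n + 1) x → x = n + 1) → ¬τ.1.r 1 n := by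
        intro h
        exfalso
        have hr : τ.1.r (n + 1) 1 :=
          Or.inr ⟨Or.inr (rel_refl π (n + 1)), Or.inl (rel_refl π 1)⟩
        have := h 1 hr
        omega
      obtain ⟨c', ℓ', h0, hk, hcovs⟩ := ih τ hsτ hQτ
      refine ⟨fun i => if i = 0 then π else c' (i - 1),
        fun i => if i = 0 then l else ℓ' (i - 1), ?_, ?_, ?_⟩
      · dsimp only
        rw [if_pos rfl]
      · dsimp only
        rw [if_neg (by omega)]
        have : k + 1 - 1 = k := by omega
        rw [this]
        exact hk
      · intro i hi
        dsimp only
        by_cases hi0 : i = 0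
        · subst hi0
          have e1 : (if (0 : ℕ) = 0 then π else c' (0 - 1)) = π := if_pos rfl
          have e2 : (if (0 : ℕ) + 1 = 0 then π else c' (0 + 1 - 1)) = c' 0 := if_neg (by omega)
          have e3 : (if (0 : ℕ) = 0 then l else ℓ' (0 - 1)) = l := if_pos rfl
          rw [e1, e2, e3, h0]
          exact ⟨hcov, hlnen⟩
        · have e1 : (if i = 0 then π else c' (i - 1)) = c' (i - 1) := if_neg hi0
          have e2 : (if i + 1 = 0 then π else c' (i + 1 - 1)) = c' (i + 1 - 1) :=
            if_neg (by omega)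
          have e3 : (if i = 0 then l else ℓ' (i - 1)) = ℓ' (i - 1) := if_neg hi0
          rw [e1, e2, e3]
          have hii : i - 1 + 1 = i := by omega
          have hii2 : i + 1 - 1 = i - 1 + 1 := by omega
          rw [hii2, ← hii]
          exact hcovs (i - 1) (by omega)
    · -- n+1 is not a singleton: merge class of 1 with class of least element not ~ 1
      push_neg at hsing
      obtain ⟨w, hw1, hw2⟩ := hsing
      set S := {x | 1 ≤ x ∧ x ≤ n + 1 ∧ ¬π.1.r 1 x} with hSdef
      have hSne : S.Nonempty := by
        by_contra hS
        push_neg at hS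
        have hall : ∀ x, 1 ≤ x → x ≤ n + 1 → π.1.r 1 x := by
          intro x h1 h2
          by_contra h3
          have hxS : x ∈ S := ⟨h1, h2, h3⟩
          rw [hS] at hxS
          exact hxS
        have hsub : Finset.Icc 2 (n + 1) ⊆
            (Finset.Icc 1 (n + 1)).filter (fun x => ∃ y, y < x ∧ π.1.r y x) := by
          intro x hx
          simp only [Finset.mem_Icc] at hx
          simp only [Finset.mem_filter, Finset.mem_Icc]
          exact ⟨⟨by omega, by omega⟩, 1, by omega, hall x (by omega) (by omega)⟩
        have := Finset.card_le_card hsub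
        rw [Nat.card_Icc] at this
        unfold sNM at hsn
        omega
      set v := sInf S with hvdef
      have hvS : v ∈ S := Nat.sInf_mem hSne
      obtain ⟨hv1, hvm, hnv⟩ := hvS
      have hleast : ∀ x, 1 ≤ x → x < v → π.1.r 1 x := by
        intro x h1 hxv
        by_contra h3
        have : x ∈ S := ⟨h1, by omega, h3⟩
        have := Nat.sInf_le this
        omega
      have hvn : v ≤ n := by
        by_contra hv'
        have hveq : v = n + 1 := by omega
        have hwb := rel_bounds π hw1 (fun h => hw2 h.symm)
        have h1w : π.1.r 1 w := hleast w (by omega) (by omega)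
        exact hnv (by rw [hveq]; exact rel_trans π h1w (rel_symm π hw1))
      have hClassV : ∀ x, π.1.r v x → v ≤ x := by
        intro x hx
        by_cases hxv : x = v
        · omega
        · have hxb := rel_bounds π hx (fun h => hxv h.symm)
          by_contra h'
          exact hnv (rel_trans π (hleast x (by omega) (by omega)) (rel_symm π hx))
      have hm' : (1 : ℕ) ≤ n + 1 := by omega
      have hnc := merge_nc_least π v hv1 hvm hnv hleast
      obtain ⟨l, hcov, hl1, hlv⟩ := merge_cover π v hm' hv1 hvm hnv hClassV hnc
      set τ := mkMerge π v hm' hv1 hvm hnc with hτdef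
      have hlnen : l ≠ n := by omega
      have hsτ : n - sNM τ = k := by
        have hms := merge_sNM π v hm' hv1 hvm hnv hClassV hnc
        rw [← hτdef] at hms
        omega
      have hQτ : (∀ x, τ.1.r (n + 1) x → x = n + 1) → ¬τ.1.r 1 n := by
        intro h
        exact absurd (h w (Or.inl hw1)) hw2
      obtain ⟨c', ℓ', h0, hk, hcovs⟩ := ih τ hsτ hQτ
      refine ⟨fun i => if i = 0 then π else c' (i - 1),
        fun i => if i = 0 then l else ℓ' (i - 1), ?_, ?_, ?_⟩
      · dsimp only
        rw [if_pos rfl]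
      · dsimp only
        rw [if_neg (by omega)]
        have : k + 1 - 1 = k := by omega
        rw [this]
        exact hk
      · intro i hi
        dsimp only
        by_cases hi0 : i = 0
        · subst hi0
          have e1 : (if (0 : ℕ) = 0 then π else c' (0 - 1)) = π := if_pos rfl
          have e2 : (if (0 : ℕ) + 1 = 0 then π else c' (0 + 1 - 1)) = c' 0 := if_neg (by omega)
          have e3 : (if (0 : ℕ) = 0 then l else ℓ' (0 - 1)) = l := if_pos rfl
          rw [e1, e2, e3, h0]
          exact ⟨hcov, hlnen⟩
        · have e1 : (if i = 0 then π else c' (i - 1)) = c' (i - 1) := if_neg hi0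
          have e2 : (if i + 1 = 0 then π else c' (i + 1 - 1)) = c' (i + 1 - 1) :=
            if_neg (by omega)
          have e3 : (if i = 0 then l else ℓ' (i - 1)) = ℓ' (i - 1) := if_neg hi0
          rw [e1, e2, e3]
          have hii : i - 1 + 1 = i := by omega
          have hii2 : i + 1 - 1 = i - 1 + 1 := by omega
          rw [hii2, ← hii]
          exact hcovs (i - 1) (by omega)

end NCAux
namespace NCAux
open scoped Classical

lemma backward {n : ℕ} (hn : 2 ≤ n) (π : NCPart (n + 1))
    (hI : ¬(π.1.r n (n + 1) ∧ ∀ x, π.1.r n x → x = n ∨ x = n + 1))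
    (hII : ¬((∀ x, π.1.r (n + 1) x → x = n + 1) ∧ π.1.r 1 n)) :
    InPosetPF n n π := by
  set k := sNM π with hkdef
  have hkn : k ≤ n := by
    have := sNM_le π
    omega
  obtain ⟨cd, ℓd, hd0, hdk, hdcov⟩ := down hn k π hkdef.symm hI
  have hQ : (∀ x, π.1.r (n + 1) x → x = n + 1) → ¬π.1.r 1 n := fun hs h1 => hII ⟨hs, h1⟩
  obtain ⟨cu, ℓu, hu0, hutop, hucov⟩ := up hn (n - k) π (by omega) hQ
  set c : ℕ → NCPart (n + 1) := fun i => if i < k then cd i else cu (i - k) with hcdef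
  set ℓ : ℕ → ℕ := fun i => if i < k then ℓd i else ℓu (i - k) with hℓdef
  have hc0 : c 0 = ncBot (n + 1) := by
    rw [hcdef]
    dsimp only
    by_cases h0 : 0 < k
    · rw [if_pos h0]
      exact hd0
    · rw [if_neg h0, Nat.zero_sub, hu0]
      exact sNM_zero π (by omega)
  have hcn : c n = ncTop (n + 1) := by
    rw [hcdef]
    dsimp only
    rw [if_neg (by omega)]
    exact hutop
  have hck : c k = π := by
    rw [hcdef]
    dsimp only
    rw [if_neg (by omega), Nat.sub_self]
    exact hu0
  have hcov : ∀ i < n, CoverLabel (c i) (c (i + 1)) (ℓ i) ∧ ℓ i ≠ n := by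
    intro i hi
    rw [hcdef, hℓdef]
    dsimp only
    by_cases h1 : i + 1 < k
    · rw [if_pos (by omega), if_pos h1, if_pos (by omega)]
      exact hdcov i (by omega)
    · by_cases h2 : i < k
      · -- i + 1 = k
        rw [if_pos h2, if_neg h1, if_pos h2]
        have hik : i + 1 = k := by omega
        rw [show i + 1 - k = 0 by omega, hu0]
        have h3 := hdcov i (by omega)
        rw [hik, hdk] at h3
        exact h3
      · rw [if_neg h2, if_neg (by omega), if_neg h2]
        have h4 := hucov (i - k) (by omega)
        rw [show i + 1 - k = (i - k) + 1 by omega]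
        exact h4
  have hcov' : ∀ i < n, CoverLabel (c i) (c (i + 1)) (ℓ i) := fun i hi => (hcov i hi).1
  refine ⟨c, ℓ, ⟨hc0, hcn, hcov', ?_, ?_, ?_⟩, k, hkn, hck⟩
  · exact chain_parking c ℓ hc0 hcn hcov'
  · intro i
    exact (hcov i i.2).2
  · intro m h1 h2
    omega

end NCAux

/-- A noncrossing partition `π ∈ NC_{n+1}` lies on some maximal chain of `NC_{n+1}` whose
Stanley label sequence omits the value `n` (i.e. `π ∈ Poset(PF_{n,n})`) if and only if
neither (i) `{n, n+1}` is a block of `π`, nor (ii) `{n+1}` is a singleton block of `π`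
and `1` and `n` lie in the same block of `π`. -/
theorem mem_posetPF_iff (n : ℕ) (hn : 2 ≤ n) (π : NCPart (n + 1)) :
    InPosetPF n n π ↔
      (¬(π.1.r n (n + 1) ∧ ∀ x, π.1.r n x → x = n ∨ x = n + 1) ∧
        ¬((∀ x, π.1.r (n + 1) x → x = n + 1) ∧ π.1.r 1 n)) := by
  constructor
  · intro h
    exact ⟨NCAux.forward_i hn π h, NCAux.forward_ii hn π h⟩
  · rintro ⟨hI, hII⟩
    exact NCAux.backward hn π hI hII
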